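/- Let L, g : [a,b] × ℝ × ℝ → ℝ be C¹ in all variables, with a < b real. Define J(y) = ∫_a^b L(t, y(t), y'(t)) dt and I(y) = ∫_a^b g(t, y(t), y'(t)) dt for y ∈ C¹([a,b]). Suppose y⋆ ∈ C¹([a,b]) is a local minimizer of J among curves with y(a) = y_a, y(b) = y_b, and I(y) = l, and suppose y⋆ is not an extremal of I, i.e., the function t ↦ g_v(t, y⋆(t), y⋆'(t)) - ∫_a^t g_x(τ, y⋆(τ), y⋆'(τ)) dτ is not constant on [a,b]. Then there exists λ ∈ ℝ such that F(t,x,v) = L(t,x,v) - λ g(t,x,v) satisfies the integral Euler–Lagrange equation: there is a constant d with F_v(t, y⋆(t), y⋆'(t)) - ∫_a^t F_x(τ, y⋆(τ), y⋆'(τ)) dτ = d for all t ∈ [a,b]. -/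

import Mathlib

open MeasureTheory intervalIntegral Set ContinuousLinearMap


lemma iso_primitive_deriv {f : ℝ → ℝ} (hf : Continuous f) (a : ℝ) :
    deriv (fun t => ∫ s in a..t, f s) = f :=
  funext fun t => ((hf.integral_hasStrictDerivAt a t).hasDerivAt).deriv

lemma iso_primitive_contDiff {f : ℝ → ℝ} (hf : Continuous f) (a : ℝ) :
    ContDiff ℝ 1 (fun t => ∫ s in a..t, f s) :=
  contDiff_one_iff_deriv.mpr
    ⟨fun t => ((hf.integral_hasStrictDerivAt a t).hasDerivAt).differentiableAt,
     by rw [iso_primitive_deriv hf a]; exact hf⟩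

lemma iso_integral_pos {f : ℝ → ℝ} (hf : Continuous f) (hnn : ∀ x, 0 ≤ f x)
    {a b t₀ : ℝ} (hab : a < b) (ht₀ : t₀ ∈ Set.Icc a b) (hpos : 0 < f t₀) :
    0 < ∫ t in a..b, f t := by
  obtain ⟨δ, hδ, hball⟩ := Metric.continuousAt_iff.mp hf.continuousAt (f t₀ / 2) (by linarith)
  set c : ℝ := max a (t₀ - δ/2) with hc
  set d : ℝ := min b (t₀ + δ/2) with hd
  have hcd : c < d := by
    rw [hc, hd]
    rcases ht₀ with ⟨h1, h2⟩
    refine max_lt (lt_min hab (by linarith)) (lt_min (by linarith) (by linarith))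
  have hac : a ≤ c := le_max_left _ _
  have hdb : d ≤ b := min_le_left _ _
  have hfpos : ∀ x ∈ Set.Ioo c d, 0 < f x := by
    intro x hx
    have h1 : t₀ - δ/2 ≤ c := le_max_right _ _
    have h2 : d ≤ t₀ + δ/2 := min_le_right _ _
    have : |x - t₀| < δ := by
      rw [abs_lt]; constructor <;> [linarith [hx.1]; linarith [hx.2]]
    have := hball (show dist x t₀ < δ by rwa [Real.dist_eq])
    rw [Real.dist_eq, abs_lt] at this
    linarith [this.1]
  have hmid : 0 < ∫ t in c..d, f t :=
    intervalIntegral_pos_of_pos_on (hf.intervalIntegrable _ _) hfpos hcd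
  have h1 : 0 ≤ ∫ t in a..c, f t :=
    intervalIntegral.integral_nonneg hac (fun u _ => hnn u)
  have h2 : 0 ≤ ∫ t in d..b, f t :=
    intervalIntegral.integral_nonneg hdb (fun u _ => hnn u)
  have hsplit : (∫ t in a..b, f t) =
      (∫ t in a..c, f t) + (∫ t in c..d, f t) + (∫ t in d..b, f t) := by
    rw [intervalIntegral.integral_add_adjacent_intervals (hf.intervalIntegrable _ _)
        (hf.intervalIntegrable _ _),
      intervalIntegral.integral_add_adjacent_intervals (hf.intervalIntegrable _ _)
        (hf.intervalIntegrable _ _)]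
  rw [hsplit]; linarith

lemma iso_eq_zero_of_integral {f : ℝ → ℝ} (hf : Continuous f) (hnn : ∀ x, 0 ≤ f x)
    {a b : ℝ} (hab : a < b) (h0 : (∫ t in a..b, f t) = 0) :
    ∀ t ∈ Set.Icc a b, f t = 0 := by
  intro t ht
  by_contra hne
  have : 0 < f t := lt_of_le_of_ne (hnn t) (Ne.symm hne)
  exact absurd h0 (ne_of_gt (iso_integral_pos hf hnn hab ht this))


lemma iso_sliceX {F : ℝ → ℝ → ℝ → ℝ}
    (hF : ContDiff ℝ 1 (fun p : ℝ × ℝ × ℝ => F p.1 p.2.1 p.2.2)) (t x v : ℝ) :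
    HasDerivAt (fun x' => F t x' v)
      (fderiv ℝ (fun p : ℝ × ℝ × ℝ => F p.1 p.2.1 p.2.2) (t, x, v) ((0, 1, 0) : ℝ × ℝ × ℝ)) x := by
  have h1 : HasDerivAt (fun x' : ℝ => ((t, x', v) : ℝ × ℝ × ℝ)) ((0, 1, 0) : ℝ × ℝ × ℝ) x :=
    (hasDerivAt_const x t).prodMk ((hasDerivAt_id x).prodMk (hasDerivAt_const x v))
  have h2 := ((hF.differentiable one_ne_zero) (t, x, v)).hasFDerivAt
  exact h2.comp_hasDerivAt x h1

lemma iso_sliceV {F : ℝ → ℝ → ℝ → ℝ}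
    (hF : ContDiff ℝ 1 (fun p : ℝ × ℝ × ℝ => F p.1 p.2.1 p.2.2)) (t x v : ℝ) :
    HasDerivAt (fun v' => F t x v')
      (fderiv ℝ (fun p : ℝ × ℝ × ℝ => F p.1 p.2.1 p.2.2) (t, x, v) ((0, 0, 1) : ℝ × ℝ × ℝ)) v := by
  have h1 : HasDerivAt (fun v' : ℝ => ((t, x, v') : ℝ × ℝ × ℝ)) ((0, 0, 1) : ℝ × ℝ × ℝ) v :=
    (hasDerivAt_const v t).prodMk ((hasDerivAt_const v x).prodMk (hasDerivAt_id v))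
  have h2 := ((hF.differentiable one_ne_zero) (t, x, v)).hasFDerivAt
  exact h2.comp_hasDerivAt v h1

lemma iso_dir_decomp (T : ℝ × ℝ × ℝ →L[ℝ] ℝ) (u w : ℝ) :
    T (0, u, w) = u * T ((0,1,0) : ℝ × ℝ × ℝ) + w * T ((0,0,1) : ℝ × ℝ × ℝ) := by
  have : ((0, u, w) : ℝ × ℝ × ℝ) = u • ((0,1,0) : ℝ × ℝ × ℝ) + w • ((0,0,1) : ℝ × ℝ × ℝ) := by
    simp [Prod.ext_iff]
  rw [this, map_add, T.map_smul, T.map_smul, smul_eq_mul, smul_eq_mul]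

lemma iso_coord_decomp (T : ℝ × ℝ →L[ℝ] ℝ) (c : ℝ × ℝ) :
    T c = c.1 * T ((1,0) : ℝ × ℝ) + c.2 * T ((0,1) : ℝ × ℝ) := by
  have : c = c.1 • ((1,0) : ℝ × ℝ) + c.2 • ((0,1) : ℝ × ℝ) := by simp [Prod.ext_iff]
  nth_rewrite 1 [this]
  rw [map_add, T.map_smul, T.map_smul, smul_eq_mul, smul_eq_mul]

lemma iso_parts {a b : ℝ} {fx fv η : ℝ → ℝ} (hfx : Continuous fx) (hfv : Continuous fv)
    (hη : ContDiff ℝ 1 η) (ha : η a = 0) (hb : η b = 0) :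
    (∫ t in a..b, (fx t * η t + fv t * deriv η t)) =
      ∫ t in a..b, ((fv t - ∫ τ in a..t, fx τ) * deriv η t) := by
  set A : ℝ → ℝ := fun t => ∫ τ in a..t, fx τ with hA
  have hAd : ∀ t, HasDerivAt A (fx t) t := fun t => (hfx.integral_hasStrictDerivAt a t).hasDerivAt
  have hAc : Continuous A := by
    have : Differentiable ℝ A := fun t => (hAd t).differentiableAt
    exact this.continuous
  have hηd : ∀ x ∈ Set.uIcc a b, HasDerivAt η (deriv η x) x :=
    fun x _ => ((hη.differentiable one_ne_zero) x).hasDerivAt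
  have hη' : Continuous (deriv η) := hη.continuous_deriv le_rfl
  have hparts := intervalIntegral.integral_mul_deriv_eq_deriv_mul
    (u := A) (v := η) (u' := fx) (v' := deriv η)
    (fun x _ => hAd x) hηd (hfx.intervalIntegrable a b) (hη'.intervalIntegrable a b)
  have hAa : A a = 0 := intervalIntegral.integral_same
  have e1 : (∫ t in a..b, (fv t - A t) * deriv η t)
      = (∫ t in a..b, fv t * deriv η t) - ∫ t in a..b, A t * deriv η t := by
    rw [← intervalIntegral.integral_sub (f := fun t => fv t * deriv η t) (g := fun t => A t * deriv η t) ((hfv.mul hη').intervalIntegrable a b)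
        ((hAc.mul hη').intervalIntegrable a b)]
    congr 1; funext t; ring
  have e2 : (∫ t in a..b, (fx t * η t + fv t * deriv η t))
      = (∫ t in a..b, fx t * η t) + ∫ t in a..b, fv t * deriv η t := by
    rw [← intervalIntegral.integral_add (f := fun t => fx t * η t) (g := fun t => fv t * deriv η t) ((hfx.mul hη.continuous).intervalIntegrable a b)
        ((hfv.mul hη').intervalIntegrable a b)]
  rw [e1, e2]
  rw [ha, hb, hAa] at hparts
  simp only [mul_zero, zero_mul, zero_sub, sub_zero] at hparts
  -- hparts : ∫ A * η' = - ∫ fx * η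
  rw [hparts]; ring


lemma iso_variation {F : ℝ → ℝ → ℝ → ℝ}
    (hF : ContDiff ℝ 1 (fun p : ℝ × ℝ × ℝ => F p.1 p.2.1 p.2.2))
    {y η₁ η₂ : ℝ → ℝ} (hy : ContDiff ℝ 1 y) (hη₁ : ContDiff ℝ 1 η₁) (hη₂ : ContDiff ℝ 1 η₂)
    (a b : ℝ) :
    ∃ D : (ℝ × ℝ) →L[ℝ] ℝ,
      HasStrictFDerivAt (fun ε : ℝ × ℝ => ∫ t in a..b,
          F t (y t + ε.1 * η₁ t + ε.2 * η₂ t)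
            (deriv y t + ε.1 * deriv η₁ t + ε.2 * deriv η₂ t)) D (0 : ℝ × ℝ) ∧
      D ((1,0) : ℝ × ℝ) = (∫ t in a..b,
          (fderiv ℝ (fun p : ℝ × ℝ × ℝ => F p.1 p.2.1 p.2.2) (t, y t, deriv y t))
            ((0, η₁ t, deriv η₁ t) : ℝ × ℝ × ℝ)) ∧
      D ((0,1) : ℝ × ℝ) = (∫ t in a..b,
          (fderiv ℝ (fun p : ℝ × ℝ × ℝ => F p.1 p.2.1 p.2.2) (t, y t, deriv y t))
            ((0, η₂ t, deriv η₂ t) : ℝ × ℝ × ℝ)) := by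
  set Ft : ℝ × ℝ × ℝ → ℝ := fun p => F p.1 p.2.1 p.2.2 with hFt
  set DF : ℝ × ℝ × ℝ → (ℝ × ℝ × ℝ) →L[ℝ] ℝ := fderiv ℝ Ft with hDF
  have hDFc : Continuous DF := hF.continuous_fderiv one_ne_zero
  have hyc : Continuous y := hy.continuous
  have hy' : Continuous (deriv y) := hy.continuous_deriv le_rfl
  have hη₁c : Continuous η₁ := hη₁.continuous
  have hη₁' : Continuous (deriv η₁) := hη₁.continuous_deriv le_rfl
  have hη₂c : Continuous η₂ := hη₂.continuous
  have hη₂' : Continuous (deriv η₂) := hη₂.continuous_deriv le_rfl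
  -- the linear map m t
  set m : ℝ → (ℝ × ℝ) →L[ℝ] ℝ × ℝ × ℝ := fun t =>
    (0 : (ℝ × ℝ) →L[ℝ] ℝ).prod
      ((η₁ t • ContinuousLinearMap.fst ℝ ℝ ℝ + η₂ t • ContinuousLinearMap.snd ℝ ℝ ℝ).prod
        (deriv η₁ t • ContinuousLinearMap.fst ℝ ℝ ℝ + deriv η₂ t • ContinuousLinearMap.snd ℝ ℝ ℝ))
    with hm
  have hmc : Continuous m := by
    have h1 : Continuous fun t =>
        (η₁ t • ContinuousLinearMap.fst ℝ ℝ ℝ + η₂ t • ContinuousLinearMap.snd ℝ ℝ ℝ) :=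
      (hη₁c.smul continuous_const).add (hη₂c.smul continuous_const)
    have h2 : Continuous fun t =>
        (deriv η₁ t • ContinuousLinearMap.fst ℝ ℝ ℝ + deriv η₂ t • ContinuousLinearMap.snd ℝ ℝ ℝ) :=
      (hη₁'.smul continuous_const).add (hη₂'.smul continuous_const)
    have hp : Continuous fun q : ((ℝ × ℝ) →L[ℝ] ℝ) × ((ℝ × ℝ) →L[ℝ] ℝ) => q.1.prod q.2 :=
      (ContinuousLinearMap.prodₗᵢ (𝕜 := ℝ) (E := ℝ × ℝ) (F := ℝ) (G := ℝ) ℝ).continuous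
    have h3 : Continuous fun t =>
        ((η₁ t • ContinuousLinearMap.fst ℝ ℝ ℝ + η₂ t • ContinuousLinearMap.snd ℝ ℝ ℝ).prod
          (deriv η₁ t • ContinuousLinearMap.fst ℝ ℝ ℝ +
            deriv η₂ t • ContinuousLinearMap.snd ℝ ℝ ℝ)) := hp.comp (h1.prodMk h2)
    have hp2 : Continuous fun q : ((ℝ × ℝ) →L[ℝ] ℝ) × ((ℝ × ℝ) →L[ℝ] ℝ × ℝ) => q.1.prod q.2 :=
      (ContinuousLinearMap.prodₗᵢ (𝕜 := ℝ) (E := ℝ × ℝ) (F := ℝ) (G := ℝ × ℝ) ℝ).continuous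
    exact hp2.comp (continuous_const.prodMk h3)
  -- the curve point
  set Y : ℝ × ℝ → ℝ → ℝ × ℝ × ℝ := fun ε t =>
    (t, y t + ε.1 * η₁ t + ε.2 * η₂ t, deriv y t + ε.1 * deriv η₁ t + ε.2 * deriv η₂ t) with hY
  have hYc : Continuous fun p : (ℝ × ℝ) × ℝ => Y p.1 p.2 := by
    apply Continuous.prodMk continuous_snd
    apply Continuous.prodMk
    · exact ((hyc.comp continuous_snd).add
        ((continuous_fst.fst.mul (hη₁c.comp continuous_snd)))).add
        (continuous_fst.snd.mul (hη₂c.comp continuous_snd))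
    · exact ((hy'.comp continuous_snd).add
        ((continuous_fst.fst.mul (hη₁'.comp continuous_snd)))).add
        (continuous_fst.snd.mul (hη₂'.comp continuous_snd))
  -- pointwise derivative in ε
  have hYder : ∀ (t : ℝ) (x : ℝ × ℝ), HasFDerivAt (fun x : ℝ × ℝ => Y x t) (m t) x := by
    intro t x
    have heq : (fun x : ℝ × ℝ => Y x t) = fun x => ((t, y t, deriv y t) : ℝ × ℝ × ℝ) + m t x := by
      funext x
      simp only [hY, hm, ContinuousLinearMap.prod_apply, ContinuousLinearMap.add_apply,
        ContinuousLinearMap.smul_apply, ContinuousLinearMap.coe_fst', ContinuousLinearMap.coe_snd',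
        ContinuousLinearMap.zero_apply, Prod.mk_add_mk, smul_eq_mul, add_zero]
      simp [Prod.ext_iff]
      constructor <;> ring
    rw [heq]
    exact (m t).hasFDerivAt.const_add _
  have hdiff : ∀ (t : ℝ) (x : ℝ × ℝ),
      HasFDerivAt (fun x : ℝ × ℝ => Ft (Y x t)) ((DF (Y x t)).comp (m t)) x := by
    intro t x
    exact (((hF.differentiable one_ne_zero) (Y x t)).hasFDerivAt).comp x (hYder t x)
  -- the candidate derivative
  set G' : ℝ × ℝ → (ℝ × ℝ) →L[ℝ] ℝ := fun ε => ∫ t in a..b, (DF (Y ε t)).comp (m t) with hG'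
  have hjoint : Continuous fun p : (ℝ × ℝ) × ℝ => (DF (Y p.1 p.2)).comp (m p.2) :=
    isBoundedBilinearMap_comp.continuous.comp
      ((hDFc.comp hYc).prodMk (hmc.comp continuous_snd))
  have hG'c : Continuous G' := by
    exact continuous_parametric_intervalIntegral_of_continuous'
      (f := fun (ε : ℝ × ℝ) (t : ℝ) => (DF (Y ε t)).comp (m t)) (μ := volume) hjoint a b
  -- HasFDerivAt everywhere
  have hGder : ∀ x₀ : ℝ × ℝ, HasFDerivAt
      (fun ε : ℝ × ℝ => ∫ t in a..b, Ft (Y ε t)) (G' x₀) x₀ := by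
    intro x₀
    -- bound on closedBall x₀ 1 × uIcc a b
    obtain ⟨M, hM⟩ : ∃ M : ℝ, ∀ q ∈ (Metric.closedBall x₀ 1) ×ˢ (Set.uIcc a b),
        ‖(DF (Y q.1 q.2)).comp (m q.2)‖ ≤ M := by
      rcases ((isCompact_closedBall x₀ 1).prod isCompact_uIcc).exists_bound_of_continuousOn
        (hjoint.norm.continuousOn) with ⟨M, hM⟩
      exact ⟨M, fun q hq => by simpa using hM q hq⟩
    apply intervalIntegral.hasFDerivAt_integral_of_dominated_of_fderiv_le
      (F := fun ε t => Ft (Y ε t)) (F' := fun ε t => (DF (Y ε t)).comp (m t))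
      (bound := fun _ => M) (s := Metric.ball x₀ 1) (Metric.ball_mem_nhds x₀ one_pos)
    · filter_upwards with x
      exact ((hF.continuous.comp (hYc.comp (Continuous.prodMk_right x)))).aestronglyMeasurable
    · exact ((hF.continuous.comp (hYc.comp (Continuous.prodMk_right x₀)))).intervalIntegrable a b
    · exact (hjoint.comp (Continuous.prodMk_right x₀)).aestronglyMeasurable
    · filter_upwards with t ht x hx
      exact hM (x, t) ⟨Metric.ball_subset_closedBall hx, Set.uIoc_subset_uIcc ht⟩
    · exact intervalIntegrable_const
    · filter_upwards with t ht x hx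
      exact hdiff t x
  -- strict differentiability at 0
  have hstrict : HasStrictFDerivAt (fun ε : ℝ × ℝ => ∫ t in a..b, Ft (Y ε t)) (G' 0) 0 :=
    hasStrictFDerivAt_of_hasFDerivAt_of_continuousAt
      (Filter.Eventually.of_forall hGder) hG'c.continuousAt
  have hint : IntervalIntegrable (fun t => (DF (Y 0 t)).comp (m t)) volume a b :=
    ((hjoint.comp (Continuous.prodMk_right (0 : ℝ × ℝ)))).intervalIntegrable a b
  refine ⟨G' 0, hstrict, ?_, ?_⟩
  · rw [hG', ContinuousLinearMap.intervalIntegral_apply hint]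
    congr 1; funext t
    simp only [ContinuousLinearMap.comp_apply, hm, hY, ContinuousLinearMap.prod_apply,
      ContinuousLinearMap.add_apply, ContinuousLinearMap.smul_apply,
      ContinuousLinearMap.coe_fst', ContinuousLinearMap.coe_snd',
      ContinuousLinearMap.zero_apply, smul_eq_mul, mul_one, mul_zero, add_zero, zero_mul,
      Prod.fst_zero, Prod.snd_zero]
  · rw [hG', ContinuousLinearMap.intervalIntegral_apply hint]
    congr 1; funext t
    simp only [ContinuousLinearMap.comp_apply, hm, hY, ContinuousLinearMap.prod_apply,
      ContinuousLinearMap.add_apply, ContinuousLinearMap.smul_apply,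
      ContinuousLinearMap.coe_fst', ContinuousLinearMap.coe_snd',
      ContinuousLinearMap.zero_apply, smul_eq_mul, mul_one, mul_zero, add_zero, zero_add, zero_mul,
      Prod.fst_zero, Prod.snd_zero]

theorem isoperimetric_necessary_condition_R
    (a b l ya yb : ℝ) (hab : a < b)
    (L g : ℝ → ℝ → ℝ → ℝ)
    (hL : ContDiff ℝ 1 (fun p : ℝ × ℝ × ℝ => L p.1 p.2.1 p.2.2))
    (hg : ContDiff ℝ 1 (fun p : ℝ × ℝ × ℝ => g p.1 p.2.1 p.2.2))
    (ystar : ℝ → ℝ) (hystar : ContDiff ℝ 1 ystar)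
    (hba : ystar a = ya) (hbb : ystar b = yb)
    (hI : (∫ t in a..b, g t (ystar t) (deriv ystar t)) = l)
    (hmin : ∃ ε > (0 : ℝ), ∀ y : ℝ → ℝ, ContDiff ℝ 1 y →
      y a = ya → y b = yb →
      (∫ t in a..b, g t (y t) (deriv y t)) = l →
      (∀ t ∈ Set.Icc a b, |y t - ystar t| + |deriv y t - deriv ystar t| < ε) →
      (∫ t in a..b, L t (ystar t) (deriv ystar t)) ≤ ∫ t in a..b, L t (y t) (deriv y t))
    (hnotext : ¬ ∃ c : ℝ, ∀ t ∈ Set.Icc a b,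
      deriv (fun v => g t (ystar t) v) (deriv ystar t) -
        (∫ τ in a..t, deriv (fun x => g τ x (deriv ystar τ)) (ystar τ)) = c) :
    ∃ lam d : ℝ, ∀ t ∈ Set.Icc a b,
      (deriv (fun v => L t (ystar t) v) (deriv ystar t) -
        lam * deriv (fun v => g t (ystar t) v) (deriv ystar t)) -
      (∫ τ in a..t, (deriv (fun x => L τ x (deriv ystar τ)) (ystar τ) -
        lam * deriv (fun x => g τ x (deriv ystar τ)) (ystar τ))) = d := by
  classical
  obtain ⟨εm, hεm, hminP⟩ := hmin
  have hysc : Continuous ystar := hystar.continuous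
  have hys' : Continuous (deriv ystar) := hystar.continuous_deriv le_rfl
  have hpc : Continuous fun t : ℝ => ((t, ystar t, deriv ystar t) : ℝ × ℝ × ℝ) :=
    continuous_id.prodMk (hysc.prodMk hys')
  set Lx : ℝ → ℝ := fun t =>
    fderiv ℝ (fun p : ℝ × ℝ × ℝ => L p.1 p.2.1 p.2.2) (t, ystar t, deriv ystar t)
      ((0,1,0) : ℝ × ℝ × ℝ) with hLx
  set Lv : ℝ → ℝ := fun t =>
    fderiv ℝ (fun p : ℝ × ℝ × ℝ => L p.1 p.2.1 p.2.2) (t, ystar t, deriv ystar t)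
      ((0,0,1) : ℝ × ℝ × ℝ) with hLv
  set gx : ℝ → ℝ := fun t =>
    fderiv ℝ (fun p : ℝ × ℝ × ℝ => g p.1 p.2.1 p.2.2) (t, ystar t, deriv ystar t)
      ((0,1,0) : ℝ × ℝ × ℝ) with hgx
  set gv : ℝ → ℝ := fun t =>
    fderiv ℝ (fun p : ℝ × ℝ × ℝ => g p.1 p.2.1 p.2.2) (t, ystar t, deriv ystar t)
      ((0,0,1) : ℝ × ℝ × ℝ) with hgv
  have hLxc : Continuous Lx := ((hL.continuous_fderiv one_ne_zero).comp hpc).clm_apply continuous_const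
  have hLvc : Continuous Lv := ((hL.continuous_fderiv one_ne_zero).comp hpc).clm_apply continuous_const
  have hgxc : Continuous gx := ((hg.continuous_fderiv one_ne_zero).comp hpc).clm_apply continuous_const
  have hgvc : Continuous gv := ((hg.continuous_fderiv one_ne_zero).comp hpc).clm_apply continuous_const
  -- conversion of first variations to coordinate form
  have hvarL : ∀ η : ℝ → ℝ,
      (∫ t in a..b, (fderiv ℝ (fun p : ℝ × ℝ × ℝ => L p.1 p.2.1 p.2.2)
          (t, ystar t, deriv ystar t)) ((0, η t, deriv η t) : ℝ × ℝ × ℝ))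
        = ∫ t in a..b, (Lx t * η t + Lv t * deriv η t) := by
    intro η; congr 1; funext t
    rw [iso_dir_decomp]; simp only [hLx, hLv]; ring
  have hvarg : ∀ η : ℝ → ℝ,
      (∫ t in a..b, (fderiv ℝ (fun p : ℝ × ℝ × ℝ => g p.1 p.2.1 p.2.2)
          (t, ystar t, deriv ystar t)) ((0, η t, deriv η t) : ℝ × ℝ × ℝ))
        = ∫ t in a..b, (gx t * η t + gv t * deriv η t) := by
    intro η; congr 1; funext t
    rw [iso_dir_decomp]; simp only [hgx, hgv]; ring
  -- nonextremality gives a good variation direction η₁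
  have hgA : Continuous fun t : ℝ => (∫ τ in a..t, gx τ) :=
    (iso_primitive_contDiff hgxc a).continuous
  set h0 : ℝ → ℝ := fun t => gv t - ∫ τ in a..t, gx τ with hh0
  have hh0c : Continuous h0 := hgvc.sub hgA
  have hne : ∀ c : ℝ, ∃ t ∈ Set.Icc a b, h0 t ≠ c := by
    intro c
    by_contra hcon
    push_neg at hcon
    refine hnotext ⟨c, fun t ht => ?_⟩
    have e1 : deriv (fun v => g t (ystar t) v) (deriv ystar t) = gv t := by
      rw [(iso_sliceV hg t (ystar t) (deriv ystar t)).deriv]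
    have e2 : (∫ τ in a..t, deriv (fun x => g τ x (deriv ystar τ)) (ystar τ))
        = ∫ τ in a..t, gx τ := by
      congr 1; funext τ
      rw [(iso_sliceX hg τ (ystar τ) (deriv ystar τ)).deriv]
    rw [e1, e2]; exact hcon t ht
  set c₁ : ℝ := (∫ t in a..b, h0 t) / (b - a) with hc₁
  set η₁ : ℝ → ℝ := fun t => ∫ s in a..t, (h0 s - c₁) with hη₁def
  have hη₁ : ContDiff ℝ 1 η₁ := iso_primitive_contDiff (hh0c.sub continuous_const) a
  have hη₁' : deriv η₁ = fun t => h0 t - c₁ := iso_primitive_deriv (hh0c.sub continuous_const) a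
  have hη₁a : η₁ a = 0 := intervalIntegral.integral_same
  have hη₁b : η₁ b = 0 := by
    show (∫ s in a..b, (h0 s - c₁)) = 0
    rw [intervalIntegral.integral_sub (hh0c.intervalIntegrable a b) intervalIntegrable_const,
      intervalIntegral.integral_const, hc₁, smul_eq_mul]
    have hba' : b - a ≠ 0 := sub_ne_zero.mpr hab.ne'
    field_simp
    ring
  set K : ℝ := ∫ t in a..b, (h0 t - c₁)^2 with hKdef
  have hKpos : 0 < K := by
    obtain ⟨t₀, ht₀, hne0⟩ := hne c₁
    refine iso_integral_pos (((hh0c.sub continuous_const).pow 2)) (fun x => sq_nonneg _)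
      hab ht₀ ?_
    have : h0 t₀ - c₁ ≠ 0 := sub_ne_zero.mpr hne0
    exact lt_of_le_of_ne (sq_nonneg _) (Ne.symm (pow_ne_zero 2 this))
  -- the first variation of the constraint along η₁ equals K
  have hPg1 : (∫ t in a..b, (gx t * η₁ t + gv t * deriv η₁ t)) = K := by
    rw [iso_parts hgxc hgvc hη₁ hη₁a hη₁b]
    simp only [hη₁']
    have step : (∫ t in a..b, (gv t - ∫ τ in a..t, gx τ) * (h0 t - c₁))
        = ∫ t in a..b, ((h0 t - c₁)^2 + c₁ * (h0 t - c₁)) := by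
      congr 1; funext t
      simp only [hh0]; ring
    rw [step, intervalIntegral.integral_add (f := fun t => (h0 t - c₁)^2) (g := fun t => c₁ * (h0 t - c₁))
        (((hh0c.sub continuous_const).pow 2).intervalIntegrable a b)
        ((continuous_const.mul (hh0c.sub continuous_const)).intervalIntegrable a b),
      intervalIntegral.integral_const_mul,
      show (∫ t in a..b, (h0 t - c₁)) = 0 from hη₁b]
    ring
  set PL1 : ℝ := ∫ t in a..b, (Lx t * η₁ t + Lv t * deriv η₁ t) with hPL1
  set lam : ℝ := PL1 / K with hlam
  -- the key orthogonality relation coming from local minimality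
  have key : ∀ η : ℝ → ℝ, ContDiff ℝ 1 η → η a = 0 → η b = 0 →
      (∫ t in a..b, (Lx t * η t + Lv t * deriv η t))
        = lam * ∫ t in a..b, (gx t * η t + gv t * deriv η t) := by
    intro η hη hηa hηb
    by_contra hcon
    set PL2 : ℝ := ∫ t in a..b, (Lx t * η t + Lv t * deriv η t) with hPL2
    set Pg2 : ℝ := ∫ t in a..b, (gx t * η t + gv t * deriv η t) with hPg2
    set Δ : ℝ := K * PL2 - Pg2 * PL1 with hΔdef
    have hΔ : Δ ≠ 0 := by
      intro hΔ0
      apply hcon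
      rw [hlam]
      rw [hΔdef, sub_eq_zero] at hΔ0
      field_simp
      linarith [hΔ0]
    obtain ⟨Dgd, hgsd, hg1, hg2⟩ := iso_variation hg hystar hη₁ hη a b
    obtain ⟨DLd, hLsd, hL1, hL2⟩ := iso_variation hL hystar hη₁ hη a b
    rw [hvarg η₁, hPg1] at hg1
    rw [hvarg η] at hg2
    rw [hvarL η₁] at hL1
    rw [hvarL η] at hL2
    set Φ : ℝ × ℝ → ℝ × ℝ := fun ε =>
      ((∫ t in a..b, g t (ystar t + ε.1 * η₁ t + ε.2 * η t)
          (deriv ystar t + ε.1 * deriv η₁ t + ε.2 * deriv η t)),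
       (∫ t in a..b, L t (ystar t + ε.1 * η₁ t + ε.2 * η t)
          (deriv ystar t + ε.1 * deriv η₁ t + ε.2 * deriv η t))) with hΦdef
    have hΦs : HasStrictFDerivAt Φ (Dgd.prod DLd) 0 := hgsd.prodMk hLsd
    have hDgdc : ∀ c : ℝ × ℝ, Dgd c = c.1 * K + c.2 * Pg2 := by
      intro c; rw [iso_coord_decomp, hg1, hg2]
    have hDLdc : ∀ c : ℝ × ℝ, DLd c = c.1 * PL1 + c.2 * PL2 := by
      intro c; rw [iso_coord_decomp, hL1, hL2]
    have hEquiv : ∃ E : (ℝ × ℝ) ≃L[ℝ] (ℝ × ℝ),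
        (E : (ℝ × ℝ) →L[ℝ] ℝ × ℝ) = Dgd.prod DLd := by
      refine ⟨LinearEquiv.toContinuousLinearEquiv
        { toFun := fun c => (Dgd c, DLd c)
          map_add' := by intro u v; simp [Prod.ext_iff]
          map_smul' := by intro r u; simp [Prod.ext_iff]
          invFun := fun q => ((PL2 * q.1 - Pg2 * q.2) / Δ, (K * q.2 - PL1 * q.1) / Δ)
          left_inv := ?_
          right_inv := ?_ }, ?_⟩
      · intro c
        simp only [hDgdc, hDLdc]
        refine Prod.ext ?_ ?_ <;> · field_simp; ring
      · intro q
        simp only [hDgdc, hDLdc]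
        refine Prod.ext ?_ ?_ <;> · simp only; field_simp; ring
      · refine ContinuousLinearMap.ext fun c => ?_
        simp [LinearEquiv.coe_toContinuousLinearEquiv]
    obtain ⟨E, hE⟩ := hEquiv
    have hΦs' : HasStrictFDerivAt Φ (E : (ℝ × ℝ) →L[ℝ] ℝ × ℝ) 0 := by rw [hE]; exact hΦs
    have hmap : Filter.map Φ (nhds 0) = nhds (Φ 0) := hΦs'.map_nhds_eq_of_equiv
    have hΦ0 : Φ 0 = (l, ∫ t in a..b, L t (ystar t) (deriv ystar t)) := by
      simp only [hΦdef, Prod.fst_zero, Prod.snd_zero, zero_mul, add_zero]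
      rw [hI]
    -- uniform bound on the variations over [a, b]
    obtain ⟨tM, htM, hMmax⟩ := isCompact_Icc.exists_isMaxOn (Set.nonempty_Icc.mpr hab.le)
      (Continuous.continuousOn (by
        exact ((hη₁.continuous.abs.add hη.continuous.abs).add
          (hη₁.continuous_deriv le_rfl).abs).add (hη.continuous_deriv le_rfl).abs) :
        ContinuousOn (fun t => |η₁ t| + |η t| + |deriv η₁ t| + |deriv η t|) (Set.Icc a b))
    set M : ℝ := |η₁ tM| + |η tM| + |deriv η₁ tM| + |deriv η tM| with hMdef
    have hMb : ∀ y ∈ Set.Icc a b, |η₁ y| + |η y| + |deriv η₁ y| + |deriv η y| ≤ M :=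
      fun y hy => by simpa using hMmax hy
    have hM0 : 0 ≤ M := le_trans (by positivity) (hMb a (Set.left_mem_Icc.mpr hab.le))
    set δ : ℝ := εm / (M + 1) with hδdef
    have hδ : 0 < δ := by positivity
    have himg : Φ '' Metric.ball 0 δ ∈ nhds (Φ 0) := by
      rw [← hmap]; exact Filter.image_mem_map (Metric.ball_mem_nhds _ hδ)
    obtain ⟨r, hr, hrsub⟩ := Metric.mem_nhds_iff.mp himg
    have hq : ((l, (∫ t in a..b, L t (ystar t) (deriv ystar t)) - r/2) : ℝ × ℝ)
        ∈ Metric.ball (Φ 0) r := by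
      rw [hΦ0, Metric.mem_ball, Prod.dist_eq]
      simp only [Real.dist_eq, sub_self, abs_zero, sub_sub_cancel_left, abs_neg]
      rw [max_lt_iff]
      constructor
      · simpa using hr
      · rw [abs_of_nonneg (by linarith)]; linarith
    obtain ⟨ε', hε'mem, hε'eq⟩ := hrsub hq
    rw [Metric.mem_ball, dist_zero_right] at hε'mem
    have hε1 : |ε'.1| ≤ ‖ε'‖ := by
      rw [← Real.norm_eq_abs]; exact norm_fst_le ε'
    have hε2 : |ε'.2| ≤ ‖ε'‖ := by
      rw [← Real.norm_eq_abs]; exact norm_snd_le ε'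
    set w : ℝ → ℝ := fun t => ystar t + ε'.1 * η₁ t + ε'.2 * η t with hwdef
    have hw : ContDiff ℝ 1 w :=
      (hystar.add (contDiff_const.mul hη₁)).add (contDiff_const.mul hη)
    have hwd : ∀ t, HasDerivAt w
        (deriv ystar t + ε'.1 * deriv η₁ t + ε'.2 * deriv η t) t := fun t =>
      (((hystar.differentiable one_ne_zero t).hasDerivAt).add
        (((hη₁.differentiable one_ne_zero t).hasDerivAt).const_mul ε'.1)).add
        (((hη.differentiable one_ne_zero t).hasDerivAt).const_mul ε'.2)
    have hwderiv : deriv w = fun t => deriv ystar t + ε'.1 * deriv η₁ t + ε'.2 * deriv η t :=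
      funext fun t => (hwd t).deriv
    have hA := congrArg Prod.fst hε'eq
    have hB := congrArg Prod.snd hε'eq
    simp only [hΦdef] at hA hB
    have hΦε1 : (∫ t in a..b, g t (w t) (deriv w t)) = l := by
      rw [hwderiv]; simp only [hwdef]; exact hA
    have hΦε2 : (∫ t in a..b, L t (w t) (deriv w t))
        = (∫ t in a..b, L t (ystar t) (deriv ystar t)) - r / 2 := by
      rw [hwderiv]; simp only [hwdef]; exact hB
    have hclose : ∀ t ∈ Set.Icc a b, |w t - ystar t| + |deriv w t - deriv ystar t| < εm := by
      intro t ht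
      have e0 : w t - ystar t = ε'.1 * η₁ t + ε'.2 * η t := by simp only [hwdef]; ring
      have e0' : deriv w t - deriv ystar t = ε'.1 * deriv η₁ t + ε'.2 * deriv η t := by
        rw [hwderiv]; ring
      rw [e0, e0']
      have e1 : |ε'.1 * η₁ t + ε'.2 * η t| ≤ |ε'.1| * |η₁ t| + |ε'.2| * |η t| :=
        (abs_add_le _ _).trans (by rw [abs_mul, abs_mul])
      have e2 : |ε'.1 * deriv η₁ t + ε'.2 * deriv η t|
          ≤ |ε'.1| * |deriv η₁ t| + |ε'.2| * |deriv η t| :=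
        (abs_add_le _ _).trans (by rw [abs_mul, abs_mul])
      have b1 : |ε'.1| * |η₁ t| ≤ ‖ε'‖ * |η₁ t| :=
        mul_le_mul_of_nonneg_right hε1 (abs_nonneg _)
      have b2 : |ε'.2| * |η t| ≤ ‖ε'‖ * |η t| :=
        mul_le_mul_of_nonneg_right hε2 (abs_nonneg _)
      have b3 : |ε'.1| * |deriv η₁ t| ≤ ‖ε'‖ * |deriv η₁ t| :=
        mul_le_mul_of_nonneg_right hε1 (abs_nonneg _)
      have b4 : |ε'.2| * |deriv η t| ≤ ‖ε'‖ * |deriv η t| :=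
        mul_le_mul_of_nonneg_right hε2 (abs_nonneg _)
      have b5 : ‖ε'‖ * (|η₁ t| + |η t| + |deriv η₁ t| + |deriv η t|) ≤ ‖ε'‖ * M :=
        mul_le_mul_of_nonneg_left (hMb t ht) (norm_nonneg _)
      have b6 : ‖ε'‖ * M ≤ δ * M := mul_le_mul_of_nonneg_right hε'mem.le hM0
      have b7 : δ * (M + 1) = εm := by rw [hδdef]; field_simp
      linarith [e1, e2, b1, b2, b3, b4, b5, b6, b7, hδ]
    have hfinal := hminP w hw
      (by simp [hwdef, hη₁a, hηa, hba])
      (by simp [hwdef, hη₁b, hηb, hbb])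
      hΦε1 hclose
    rw [hΦε2] at hfinal
    linarith
  -- DuBois-Reymond argument for F = L - lam • g
  set Fx : ℝ → ℝ := fun t => Lx t - lam * gx t with hFx
  set Fv : ℝ → ℝ := fun t => Lv t - lam * gv t with hFvdef
  have hFxc : Continuous Fx := hLxc.sub (continuous_const.mul hgxc)
  have hFvc : Continuous Fv := hLvc.sub (continuous_const.mul hgvc)
  have hFA : Continuous fun t : ℝ => (∫ τ in a..t, Fx τ) :=
    (iso_primitive_contDiff hFxc a).continuous
  set h1 : ℝ → ℝ := fun t => Fv t - ∫ τ in a..t, Fx τ with hh1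
  have hh1c : Continuous h1 := hFvc.sub hFA
  have hvanish : ∀ η : ℝ → ℝ, ContDiff ℝ 1 η → η a = 0 → η b = 0 →
      (∫ t in a..b, h1 t * deriv η t) = 0 := by
    intro η hη hηa hηb
    have hη'c : Continuous (deriv η) := hη.continuous_deriv le_rfl
    have expand : (∫ t in a..b, (Fx t * η t + Fv t * deriv η t))
        = (∫ t in a..b, (Lx t * η t + Lv t * deriv η t))
          - lam * ∫ t in a..b, (gx t * η t + gv t * deriv η t) := by
      rw [← intervalIntegral.integral_const_mul, ← intervalIntegral.integral_sub (f := fun t => Lx t * η t + Lv t * deriv η t) (g := fun t => lam * (gx t * η t + gv t * deriv η t))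
        (((hLxc.mul hη.continuous).add (hLvc.mul hη'c)).intervalIntegrable a b)
        ((continuous_const.mul ((hgxc.mul hη.continuous).add
          (hgvc.mul hη'c))).intervalIntegrable a b)]
      congr 1; funext t; simp only [hFx, hFvdef]; ring
    have h2 : (∫ t in a..b, (Fx t * η t + Fv t * deriv η t)) = 0 := by
      rw [expand, key η hη hηa hηb]; ring
    rw [iso_parts hFxc hFvc hη hηa hηb] at h2
    exact h2
  set c₂ : ℝ := (∫ t in a..b, h1 t) / (b - a) with hc₂
  set η₂ : ℝ → ℝ := fun t => ∫ s in a..t, (h1 s - c₂) with hη₂def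
  have hη₂ : ContDiff ℝ 1 η₂ := iso_primitive_contDiff (hh1c.sub continuous_const) a
  have hη₂' : deriv η₂ = fun t => h1 t - c₂ := iso_primitive_deriv (hh1c.sub continuous_const) a
  have hη₂a : η₂ a = 0 := intervalIntegral.integral_same
  have hη₂b : η₂ b = 0 := by
    show (∫ s in a..b, (h1 s - c₂)) = 0
    rw [intervalIntegral.integral_sub (hh1c.intervalIntegrable a b) intervalIntegrable_const,
      intervalIntegral.integral_const, hc₂, smul_eq_mul]
    have hba' : b - a ≠ 0 := sub_ne_zero.mpr hab.ne'
    field_simp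
    ring
  have hzero : (∫ t in a..b, (h1 t - c₂)^2) = 0 := by
    have hv := hvanish η₂ hη₂ hη₂a hη₂b
    simp only [hη₂'] at hv
    have split : (∫ t in a..b, (h1 t - c₂)^2)
        = (∫ t in a..b, h1 t * (h1 t - c₂)) - c₂ * ∫ t in a..b, (h1 t - c₂) := by
      rw [← intervalIntegral.integral_const_mul, ← intervalIntegral.integral_sub (f := fun t => h1 t * (h1 t - c₂)) (g := fun t => c₂ * (h1 t - c₂))
        ((hh1c.mul (hh1c.sub continuous_const)).intervalIntegrable a b)
        ((continuous_const.mul (hh1c.sub continuous_const)).intervalIntegrable a b)]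
      congr 1; funext t; ring
    rw [split, hv, show (∫ s in a..b, (h1 s - c₂)) = 0 from hη₂b]
    ring
  have hconst := iso_eq_zero_of_integral ((hh1c.sub continuous_const).pow 2)
    (fun x => sq_nonneg _) hab hzero
  refine ⟨lam, c₂, fun t ht => ?_⟩
  have h' : h1 t = c₂ := by
    have := hconst t ht
    have h2 := pow_eq_zero_iff (n := 2) (by norm_num) |>.mp this
    linarith [sub_eq_zero.mp h2]
  rw [(iso_sliceV hL t (ystar t) (deriv ystar t)).deriv,
    (iso_sliceV hg t (ystar t) (deriv ystar t)).deriv]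
  have eint : (∫ τ in a..t, (deriv (fun x => L τ x (deriv ystar τ)) (ystar τ)
      - lam * deriv (fun x => g τ x (deriv ystar τ)) (ystar τ))) = ∫ τ in a..t, Fx τ := by
    congr 1; funext τ
    rw [(iso_sliceX hL τ (ystar τ) (deriv ystar τ)).deriv,
      (iso_sliceX hg τ (ystar τ) (deriv ystar τ)).deriv]
  rw [eint]
  have : h1 t = Fv t - ∫ τ in a..t, Fx τ := by simp only [hh1]
  rw [this] at h'
  simp only [hFvdef, hLv, hgv] at h'
  exact h'
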